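/- arXiv:2204.12132 — 2 statements merged into one kernel-verified Lean document; each statement's English description precedes it below -/
import Mathlib

section
/- Let $R$ be a Noetherian ring and $M$ a finitely generated torsion-free $R$-module. Then $\widetilde{M}=\bigcup_{a\in\mathrm{W}(R)}\frac{\mathrm{U}(aM)}{a}$, where $\mathrm{W}(R)$ is the set of non-zerodivisors of $R$. -/
open Pointwise

/-- The height of an ideal. -/
noncomputable def idealHt {R : Type*} [CommRing R] (I : Ideal R) : ℕ∞ :=
  ⨅ p ∈ {p : PrimeSpectrum R | I ≤ p.asIdeal}, Order.height p

/-- `Min¹_R(M/aM)`: the height-one minimal primes of the support of `M/aM`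
(equivalently, of the annihilator of `M/aM`, as `M` is finitely generated). -/
noncomputable def minOne (R : Type*) [CommRing R] (M : Type*) [AddCommGroup M]
    [Module R M] (a : R) : Set (Ideal R) :=
  {p | p ∈ (Module.annihilator R (M ⧸ (a • (⊤ : Submodule R M)))).minimalPrimes ∧
    idealHt p = 1}

/-- `U(aM)`: the intersection of the primary components of `aM` in `M` at the
height-one minimal primes of `M/aM` (the primary component at a minimal prime
`p` being the saturation `{x ∈ M | sx ∈ aM for some s ∉ p}`); by convention
`U(aM) = M` when there are no such primes. -/
noncomputable def Uset (R : Type*) [CommRing R] (M : Type*) [AddCommGroup M]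
    [Module R M] (a : R) : Set M :=
  ⋂ p ∈ minOne R M a, {x : M | ∃ s, s ∉ p ∧ s • x ∈ (a • (⊤ : Submodule R M))}

section Aux

variable {R : Type*} [CommRing R]

private lemma mem_smul_top_iff {M : Type*} [AddCommGroup M] [Module R M] {a : R} {x : M} :
    x ∈ a • (⊤ : Submodule R M) ↔ ∃ y, a • y = x := by
  constructor
  · intro h
    rw [← SetLike.mem_coe, Submodule.coe_pointwise_smul] at h
    obtain ⟨y, -, hy⟩ := h
    exact ⟨y, hy⟩
  · rintro ⟨y, rfl⟩
    exact Submodule.smul_mem_pointwise_smul y a ⊤ trivial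

private lemma notMem_of_minimalPrime {q : Ideal R} (hq : q ∈ minimalPrimes R) {a : R}
    (ha : a ∈ nonZeroDivisors R) : a ∉ q := by
  intro haq
  haveI : q.IsPrime := hq.1.1
  have hmem : algebraMap R (Localization q.primeCompl) a ∈ IsLocalRing.maximalIdeal _ :=
    (IsLocalization.AtPrime.to_map_mem_maximal_iff _ q a).mpr haq
  exact Set.disjoint_left.mp (Ideal.disjoint_nonZeroDivisors_of_mem_minimalPrimes hq) haq ha

private lemma one_le_height {a : R} (ha : a ∈ nonZeroDivisors R) {P : PrimeSpectrum R}
    (haP : a ∈ P.asIdeal) : 1 ≤ Order.height P := by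
  obtain ⟨q, hq, hqle⟩ := Ideal.exists_minimalPrimes_le (I := (⊥ : Ideal R)) bot_le
    (J := P.asIdeal)
  haveI hqp : q.IsPrime := hq.1.1
  have hne : q ≠ P.asIdeal := fun h => notMem_of_minimalPrime hq ha (h ▸ haP)
  have hlt : (⟨q, hqp⟩ : PrimeSpectrum R) < P :=
    lt_of_le_of_ne ((PrimeSpectrum.asIdeal_le_asIdeal _ _).mp hqle)
      (fun h => hne (congrArg PrimeSpectrum.asIdeal h))
  have h := Order.length_le_height_last
    (p := (RelSeries.singleton _ (⟨q, hqp⟩ : PrimeSpectrum R)).snoc P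
      (by rwa [RelSeries.last_singleton]))
  simpa using h

private lemma two_le_height {Q P : PrimeSpectrum R} (h1 : 1 ≤ Order.height Q)
    (hlt : Q < P) : 2 ≤ Order.height P := by
  obtain ⟨p, hlast, hlen⟩ := Order.exists_series_of_le_height Q (n := 1) h1
  have h := Order.length_le_height_last (p := p.snoc P (hlast ▸ hlt))
  simpa [hlen] using h

private lemma idealHt_anti {I J : Ideal R} (h : I ≤ J) : idealHt I ≤ idealHt J :=
  le_iInf₂ fun P hP => iInf₂_le P (h.trans hP)

private lemma idealHt_prime (P : PrimeSpectrum R) : idealHt P.asIdeal = Order.height P :=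
  le_antisymm (iInf₂_le P le_rfl)
    (le_iInf₂ fun Q hQ => Order.height_mono ((PrimeSpectrum.asIdeal_le_asIdeal _ _).mp hQ))

end Aux

/-- for a finitely generated torsion-free module `M` over a
Noetherian ring `R`, `M̃ = ⋃_{a ∈ W(R)} U(aM)/a` inside `V = Q(R) ⊗ M`. -/
theorem stmt13 {R : Type*} [CommRing R] [IsNoetherianRing R]
    {M : Type*} [AddCommGroup M] [Module R M] [Module.Finite R M]
    (htf : ∀ r ∈ nonZeroDivisors R, Function.Injective fun x : M => r • x) :
    {f : LocalizedModule (nonZeroDivisors R) M | ∃ I : Ideal R, 2 ≤ idealHt I ∧ ∀ i ∈ I,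
        i • f ∈ LinearMap.range (LocalizedModule.mkLinearMap (nonZeroDivisors R) M)} =
      ⋃ a ∈ nonZeroDivisors R,
        {f | a • f ∈ (LocalizedModule.mkLinearMap (nonZeroDivisors R) M) '' Uset R M a} := by
  classical
  set S := nonZeroDivisors R with hS
  have mkinj : Function.Injective (LocalizedModule.mkLinearMap S M) := by
    intro m m' h
    have h' : LocalizedModule.mk m 1 = LocalizedModule.mk m' 1 := h
    obtain ⟨u, hu⟩ := LocalizedModule.mk_eq.mp h'
    simp only [one_smul] at hu
    rw [Submonoid.smul_def, Submonoid.smul_def] at hu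
    exact htf u u.2 hu
  ext f
  simp only [Set.mem_setOf_eq, Set.mem_iUnion, Set.mem_image]
  constructor
  · rintro ⟨I, hI2, hIf⟩
    obtain ⟨m, s, rfl⟩ : ∃ m s, f = LocalizedModule.mk m s := by
      induction f using LocalizedModule.induction_on with
      | _ m s => exact ⟨m, s, rfl⟩
    refine ⟨(s : R), s.2, ?_⟩
    have hsf : (s : R) • LocalizedModule.mk m s = LocalizedModule.mkLinearMap S M m := by
      rw [LocalizedModule.smul'_mk, ← Submonoid.smul_def, LocalizedModule.mk_cancel]
      rfl
    refine ⟨m, ?_, hsf.symm⟩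
    refine Set.mem_iInter₂.mpr fun p hp => ?_
    have hnle : ¬ I ≤ p := by
      intro hle
      have h21 : (2 : ℕ∞) ≤ 1 := (hI2.trans (idealHt_anti hle)).trans_eq hp.2
      norm_num at h21
    obtain ⟨r, hrI, hrp⟩ := SetLike.not_le_iff_exists.mp hnle
    obtain ⟨y, hy⟩ := hIf r hrI
    refine ⟨r, hrp, mem_smul_top_iff.mpr ⟨y, ?_⟩⟩
    apply mkinj
    rw [map_smul, map_smul, hy, ← hsf, smul_comm]
  · rintro ⟨a, ha, x, hxU, hxf⟩
    set I : Ideal R := Submodule.comap (LinearMap.toSpanSingleton R _ f)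
      (LinearMap.range (LocalizedModule.mkLinearMap S M)) with hIdef
    have memI_iff : ∀ r : R,
        r ∈ I ↔ r • f ∈ LinearMap.range (LocalizedModule.mkLinearMap S M) := by
      intro r
      rw [hIdef, Submodule.mem_comap, LinearMap.toSpanSingleton_apply]
    have key : ∀ r : R, r • x ∈ a • (⊤ : Submodule R M) → r ∈ I := by
      intro r hr
      obtain ⟨y, hy⟩ := mem_smul_top_iff.mp hr
      have heq : (⟨a, ha⟩ : S) • (r • f) =
          (⟨a, ha⟩ : S) • (LocalizedModule.mkLinearMap S M y) := by
        show a • (r • f) = a • (LocalizedModule.mkLinearMap S M y)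
        calc a • (r • f) = r • (a • f) := smul_comm a r f
          _ = r • (LocalizedModule.mkLinearMap S M x) := by rw [hxf]
          _ = LocalizedModule.mkLinearMap S M (r • x) := (map_smul _ _ _).symm
          _ = LocalizedModule.mkLinearMap S M (a • y) := by rw [hy]
          _ = a • LocalizedModule.mkLinearMap S M y := map_smul _ _ _
      have hrf : r • f = LocalizedModule.mkLinearMap S M y :=
        IsLocalizedModule.smul_injective (LocalizedModule.mkLinearMap S M) (⟨a, ha⟩ : S) heq
      exact (memI_iff r).mpr ⟨y, hrf.symm⟩
    have haI : a ∈ I := (memI_iff a).mpr ⟨x, hxf⟩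
    have haA : a ∈ Module.annihilator R (M ⧸ (a • (⊤ : Submodule R M))) := by
      refine Module.mem_annihilator.mpr fun z => ?_
      obtain ⟨w, rfl⟩ := Submodule.Quotient.mk_surjective _ z
      rw [← Submodule.Quotient.mk_smul, Submodule.Quotient.mk_eq_zero]
      exact Submodule.smul_mem_pointwise_smul w a ⊤ trivial
    have hAI : Module.annihilator R (M ⧸ (a • (⊤ : Submodule R M))) ≤ I := by
      intro r hr
      apply key
      have h0 := Module.mem_annihilator.mp hr (Submodule.Quotient.mk x)
      rwa [← Submodule.Quotient.mk_smul, Submodule.Quotient.mk_eq_zero] at h0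
    refine ⟨I, ?_, fun i hi => (memI_iff i).mp hi⟩
    refine le_iInf fun P => le_iInf fun hP => ?_
    have hP' : I ≤ P.asIdeal := hP
    obtain ⟨q, hq, hqle⟩ := Ideal.exists_minimalPrimes_le (hAI.trans hP')
    haveI hqp : q.IsPrime := hq.1.1
    have haq : a ∈ q := hq.1.2 haA
    have h1Q : 1 ≤ Order.height (⟨q, hqp⟩ : PrimeSpectrum R) := one_le_height ha haq
    rcases lt_or_eq_of_le hqle with hlt | heq
    · refine two_le_height h1Q ?_
      exact lt_of_le_of_ne ((PrimeSpectrum.asIdeal_le_asIdeal _ _).mp hlt.le)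
        (fun h => hlt.ne (congrArg PrimeSpectrum.asIdeal h))
    · by_contra h2
      push_neg at h2
      have hQP : (⟨q, hqp⟩ : PrimeSpectrum R) = P := PrimeSpectrum.ext heq
      have h1P : 1 ≤ Order.height P := hQP ▸ h1Q
      have hle1 : Order.height P ≤ 1 := by
        rw [(by norm_num : (2 : ℕ∞) = 1 + 1)] at h2
        exact (ENat.lt_add_one_iff (by norm_num : (1 : ℕ∞) ≠ ⊤)).mp h2
      have hP1 : Order.height P = 1 := le_antisymm hle1 h1P
      have hmem : P.asIdeal ∈ minOne R M a := by
        constructor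
        · exact heq ▸ hq
        · rw [idealHt_prime]; exact hP1
      obtain ⟨t, htp, htx⟩ := Set.mem_iInter₂.mp hxU P.asIdeal hmem
      exact htp (hP' (key t htx))
end

section
/- Let $R$ be a Noetherian ring and $M$ a finitely generated torsion-free $R$-module such that $\widetilde{M}$ is a finitely generated $R$-module. Then there exist non-zerodivisors $a,b$ of $R$ such that $\widetilde{M}=\frac{M}{a}\cap\frac{M}{b}$ inside $\mathrm{Q}(R)\otimes_R M$. -/
section AssocFinite

variable {R : Type*} [CommRing R]

/-- Associated primes of a module decompose along a submodule. -/
theorem assoc_subset_union [IsNoetherianRing R] {M : Type*} [AddCommGroup M] [Module R M] (N : Submodule R M) :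
    associatedPrimes R M ⊆ associatedPrimes R N ∪ associatedPrimes R (M ⧸ N) := by
  rintro p hp'
  obtain ⟨hp, x, rfl⟩ := isAssociatedPrime_iff.mp hp'
  by_cases h : ∀ r : R, r • x ∈ N → r • x = 0
  · right
    refine isAssociatedPrime_iff.mpr ⟨hp, N.mkQ x, ?_⟩
    ext r
    rw [Submodule.mem_colon_singleton, Submodule.mem_colon_singleton, Submodule.mem_bot,
      Submodule.mem_bot, ← map_smul, Submodule.mkQ_apply, Submodule.Quotient.mk_eq_zero]
    exact ⟨fun h' => h' ▸ N.zero_mem, h r⟩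
  · push_neg at h
    obtain ⟨r, hrN, hr0⟩ := h
    left
    have hrp : r ∉ (⊥ : Submodule R M).colon {x} := by
      rw [Submodule.mem_colon_singleton, Submodule.mem_bot]; exact hr0
    refine isAssociatedPrime_iff.mpr ⟨hp, ⟨r • x, hrN⟩, ?_⟩
    ext s
    rw [Submodule.mem_colon_singleton, Submodule.mem_colon_singleton, Submodule.mem_bot,
      Submodule.mem_bot]
    constructor
    · intro hs
      apply Subtype.ext
      show s • (r • x) = 0
      rw [smul_comm, hs, smul_zero]
    · intro hs
      have : s • (r • x) = 0 := congrArg Subtype.val hs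
      rw [smul_smul] at this
      have hmem : s * r ∈ (⊥ : Submodule R M).colon {x} := by
        rw [Submodule.mem_colon_singleton, Submodule.mem_bot]; exact this
      rcases hp.mem_or_mem hmem with h' | h'
      · rwa [Submodule.mem_colon_singleton, Submodule.mem_bot] at h'
      · exact absurd h' hrp

theorem assoc_step [IsNoetherianRing R] {M : Type*} [AddCommGroup M] [Module R M]
    (N : Submodule R M) (hfin : (associatedPrimes R N).Finite) (hN : N ≠ ⊤) :
    ∃ N' : Submodule R M, N < N' ∧ (associatedPrimes R N').Finite := by
  haveI : Nontrivial (M ⧸ N) :=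
    Submodule.Quotient.nontrivial_iff.mpr hN
  obtain ⟨p, hp'⟩ := associatedPrimes.nonempty R (M ⧸ N)
  obtain ⟨hp, xb, hpx⟩ := isAssociatedPrime_iff.mp hp'
  obtain ⟨x, rfl⟩ := N.mkQ_surjective xb
  have hxN : x ∉ N := by
    intro hx
    apply hp.ne_top
    have h0 : N.mkQ x = 0 := (Submodule.Quotient.mk_eq_zero N).mpr hx
    rw [hpx, h0]; ext r; simp [Submodule.mem_colon_singleton]
  set N' : Submodule R M := N ⊔ Submodule.span R {x} with hN'
  have hxN' : x ∈ N' := Submodule.mem_sup_right (Submodule.mem_span_singleton_self x)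
  have hlt : N < N' := lt_of_le_of_ne le_sup_left (by
    intro h
    exact hxN (h ▸ hxN'))
  refine ⟨N', hlt, ?_⟩
  -- the copy of `N` inside `N'`
  set N₀ : Submodule R N' := N.comap N'.subtype with hN₀
  have hmemN₀ : ∀ y : N', y ∈ N₀ ↔ (y : M) ∈ N := fun y => Iff.rfl
  -- the map `R → N'⧸N₀`
  have hsm : ∀ r : R, r • x ∈ N' := fun r => N'.smul_mem r hxN'
  let ψ : R →ₗ[R] N' := (LinearMap.toSpanSingleton R M x).codRestrict N' (fun r => by
    simpa [LinearMap.toSpanSingleton_apply] using hsm r)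
  let φ : R →ₗ[R] (N' ⧸ N₀) := N₀.mkQ.comp ψ
  have hψ : ∀ r : R, ((ψ r : N') : M) = r • x := fun r => rfl
  have hsurj : Function.Surjective φ := by
    intro yb
    obtain ⟨y, rfl⟩ := N₀.mkQ_surjective yb
    obtain ⟨n, hn, z, hz, hnz⟩ := Submodule.mem_sup.mp y.2
    obtain ⟨r, rfl⟩ := Submodule.mem_span_singleton.mp hz
    refine ⟨r, ?_⟩
    show N₀.mkQ (ψ r) = N₀.mkQ y
    rw [Submodule.mkQ_apply, Submodule.mkQ_apply, Submodule.Quotient.eq]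
    rw [hmemN₀]
    have : ((ψ r - y : N') : M) = r • x - y := by
      rw [Submodule.coe_sub, hψ]
    rw [this, ← hnz]
    simpa using N.neg_mem hn
  have hker : LinearMap.ker φ = p := by
    ext r
    rw [LinearMap.mem_ker]
    show N₀.mkQ (ψ r) = 0 ↔ r ∈ p
    rw [Submodule.mkQ_apply, Submodule.Quotient.mk_eq_zero, hmemN₀, hψ]
    rw [hpx, Submodule.mem_colon_singleton, Submodule.mem_bot, ← map_smul, Submodule.mkQ_apply,
      Submodule.Quotient.mk_eq_zero]
  have e1 : (R ⧸ p) ≃ₗ[R] (N' ⧸ N₀) :=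
    (Submodule.quotEquivOfEq p (LinearMap.ker φ) hker.symm).trans
      (φ.quotKerEquivOfSurjective hsurj)
  have e2 : (N₀ : Type _) ≃ₗ[R] N := Submodule.comapSubtypeEquivOfLe (le_sup_left : N ≤ N')
  have hAssN₀ : associatedPrimes R N₀ = associatedPrimes R N := LinearEquiv.AssociatedPrimes.eq e2
  have hAssQ : associatedPrimes R (N' ⧸ N₀) = {p.radical} := by
    rw [← LinearEquiv.AssociatedPrimes.eq e1]
    exact associatedPrimes.eq_singleton_of_isPrimary hp.isPrimary
  refine Set.Finite.subset ?_ (assoc_subset_union N₀)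
  exact Set.Finite.union (by rw [hAssN₀]; exact hfin)
    (by rw [hAssQ]; exact Set.finite_singleton _)

theorem assoc_finite (R M : Type*) [CommRing R] [IsNoetherianRing R] [AddCommGroup M]
    [Module R M] [Module.Finite R M] : (associatedPrimes R M).Finite := by
  haveI : IsNoetherian R M := isNoetherian_of_isNoetherianRing_of_finite R M
  have hbot : (associatedPrimes R (⊥ : Submodule R M)).Finite := by
    haveI : Subsingleton (⊥ : Submodule R M) :=
      ⟨fun a b => Subtype.ext (by
        rw [(Submodule.mem_bot R).mp a.2, (Submodule.mem_bot R).mp b.2])⟩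
    rw [associatedPrimes.eq_empty_of_subsingleton]
    exact Set.finite_empty
  obtain ⟨N, hNfin, hNmax⟩ := set_has_maximal_iff_noetherian.mpr ‹IsNoetherian R M›
    {N : Submodule R M | (associatedPrimes R N).Finite} ⟨⊥, hbot⟩
  have htop : N = ⊤ := by
    by_contra h
    obtain ⟨N', hlt, hfin⟩ := assoc_step N hNfin h
    exact hNmax N' hfin hlt
  have h2 : (associatedPrimes R (⊤ : Submodule R M)).Finite := htop ▸ hNfin
  rwa [LinearEquiv.AssociatedPrimes.eq (Submodule.topEquiv (R := R) (M := M))] at h2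

/-- A non-zerodivisor does not lie in any minimal prime. -/
theorem not_mem_minimalPrimes_of_mem_nonZeroDivisors {c : R} (hc : c ∈ nonZeroDivisors R)
    {q : Ideal R} (hq : q ∈ minimalPrimes R) : c ∉ q := by
  intro hcq
  have hqprime : q.IsPrime := hq.1.1
  have h1q : (1 : R) ∉ q := (Ideal.ne_top_iff_one q).mp hqprime.ne_top
  let W : Submonoid R :=
    { carrier := {y | ∃ n : ℕ, ∃ s, s ∉ q ∧ y = c ^ n * s}
      one_mem' := ⟨0, 1, h1q, by simp⟩
      mul_mem' := by
        rintro a b ⟨n, s, hs, rfl⟩ ⟨m, t, ht, rfl⟩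
        exact ⟨n + m, s * t, fun h => (hqprime.mem_or_mem h).elim hs ht, by ring⟩ }
  by_cases h0 : (0 : R) ∈ W
  · obtain ⟨n, s, hs, hzero⟩ := h0
    have hcn : c ^ n ∈ nonZeroDivisors R := pow_mem hc n
    have : s = 0 := mem_nonZeroDivisors_iff_right.mp hcn s (by rw [mul_comm]; exact hzero.symm)
    exact hs (this ▸ q.zero_mem)
  · have hdisj : Disjoint ((⊥ : Ideal R) : Set R) (W : Set R) := by
      rw [Set.disjoint_left]
      intro y hy
      have : y = 0 := by simpa using hy
      rw [this]; exact h0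
    obtain ⟨P, hPprime, -, hPdisj⟩ := Ideal.exists_le_prime_disjoint ⊥ W hdisj
    have hPq : P ≤ q := by
      intro y hyP
      by_contra hyq
      exact Set.disjoint_left.mp hPdisj hyP ⟨0, y, hyq, by simp⟩
    have hcP : c ∉ P := fun hcP =>
      Set.disjoint_left.mp hPdisj hcP ⟨1, 1, h1q, by simp⟩
    have : q ≤ P := hq.2 ⟨hPprime, bot_le⟩ hPq
    exact hcP (this hcq)

end AssocFinite

/-- for a finitely generated torsion-free module `M` over a
Noetherian ring `R`, if `M̃` is a finitely generated `R`-module, then there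
exist non-zerodivisors `a, b` with `M̃ = M/a ∩ M/b` inside `V = Q(R) ⊗ M`. -/
theorem stmt16 {R : Type*} [CommRing R] [IsNoetherianRing R]
    {M : Type*} [AddCommGroup M] [Module R M] [Module.Finite R M]
    (htf : ∀ r ∈ nonZeroDivisors R, Function.Injective fun x : M => r • x)
    (T : Set (LocalizedModule (nonZeroDivisors R) M))
    (hT : T = {f | ∃ I : Ideal R, 2 ≤ idealHt I ∧ ∀ i ∈ I,
      i • f ∈ LinearMap.range (LocalizedModule.mkLinearMap (nonZeroDivisors R) M)})
    (hfg : ∃ s : Finset (LocalizedModule (nonZeroDivisors R) M),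
      T = ↑(Submodule.span R (↑s : Set (LocalizedModule (nonZeroDivisors R) M)))) :
    ∃ a ∈ nonZeroDivisors R, ∃ b ∈ nonZeroDivisors R,
      T = {f | a • f ∈ Set.range (LocalizedModule.mkLinearMap (nonZeroDivisors R) M)} ∩
          {f | b • f ∈ Set.range (LocalizedModule.mkLinearMap (nonZeroDivisors R) M)} := by
  classical
  obtain ⟨s, hs⟩ := hfg
  set N : Submodule R (LocalizedModule (nonZeroDivisors R) M) :=
    LinearMap.range (LocalizedModule.mkLinearMap (nonZeroDivisors R) M) with hN
  -- common denominators
  have hden : ∀ x : LocalizedModule (nonZeroDivisors R) M, ∃ c ∈ nonZeroDivisors R, c • x ∈ N := by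
    intro x
    induction x using LocalizedModule.induction_on with
    | _ m t =>
      refine ⟨(t : R), t.2, ⟨m, ?_⟩⟩
      rw [LocalizedModule.mkLinearMap_apply, LocalizedModule.smul'_mk, ← Submonoid.smul_def,
        LocalizedModule.mk_cancel]
  have hcden : ∀ t : Finset (LocalizedModule (nonZeroDivisors R) M), ∃ c ∈ nonZeroDivisors R, ∀ x ∈ t, c • x ∈ N := by
    intro t
    induction t using Finset.induction_on with
    | empty => exact ⟨1, one_mem _, by simp⟩
    | @insert a t' ha ih =>
      obtain ⟨c, hcS, hc⟩ := ih
      obtain ⟨d, hdS, hd⟩ := hden a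
      refine ⟨c * d, mul_mem hcS hdS, fun x hx => ?_⟩
      rcases Finset.mem_insert.mp hx with rfl | hx
      · rw [mul_smul]; exact N.smul_mem c hd
      · rw [mul_comm, mul_smul]; exact N.smul_mem d (hc x hx)
  obtain ⟨c, hcS, hcs⟩ := hcden s
  -- membership of generators in T
  have hxT : ∀ x ∈ s, x ∈ T := fun x hx => by
    rw [hs]; exact Submodule.subset_span hx
  -- an ideal of height ≥ 2 multiplying all generators into N
  have hIex : ∃ I : Ideal R, (∀ p : PrimeSpectrum R, I ≤ p.asIdeal → 2 ≤ Order.height p) ∧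
      ∀ i ∈ I, ∀ x ∈ s, i • x ∈ N := by
    have : ∀ t : Finset (LocalizedModule (nonZeroDivisors R) M), (∀ x ∈ t, x ∈ T) →
        ∃ I : Ideal R, (∀ p : PrimeSpectrum R, I ≤ p.asIdeal → 2 ≤ Order.height p) ∧
          ∀ i ∈ I, ∀ x ∈ t, i • x ∈ N := by
      intro t
      induction t using Finset.induction_on with
      | empty =>
        exact fun _ => ⟨⊤, fun p hp => absurd (top_le_iff.mp hp) p.2.ne_top, by simp⟩
      | @insert a t' ha ih =>
        intro h
        obtain ⟨I, hI1, hI2⟩ := ih (fun x hx => h x (Finset.mem_insert_of_mem hx))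
        have haT := h a (Finset.mem_insert_self a t')
        rw [hT] at haT
        obtain ⟨J, hJht, hJmem⟩ := haT
        refine ⟨I * J, ?_, ?_⟩
        · intro p hp
          rcases p.2.mul_le.mp hp with h' | h'
          · exact hI1 p h'
          · refine le_trans hJht ?_
            exact iInf₂_le p h'
        · intro i hi x hx
          rcases Finset.mem_insert.mp hx with rfl | hx
          · exact hJmem i (Ideal.mul_le_right hi)
          · exact hI2 i (Ideal.mul_le_left hi) x hx
    exact this s hxT
  obtain ⟨I, hIht, hIs⟩ := hIex
  -- the conductor-like ideal K
  set K : Ideal R := I ⊔ Ideal.span {c} with hK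
  have hcK : c ∈ K := Ideal.mem_sup_right (Ideal.mem_span_singleton_self c)
  have hIK : I ≤ K := le_sup_left
  have hKgen : ∀ k ∈ K, ∀ x ∈ s, k • x ∈ N := by
    intro k hk x hx
    obtain ⟨i, hi, z, hz, rfl⟩ := Submodule.mem_sup.mp hk
    obtain ⟨r, rfl⟩ := Ideal.mem_span_singleton'.mp hz
    rw [add_smul, mul_smul]
    exact N.add_mem (hIs i hi x hx) (N.smul_mem r (hcs x hx))
  have hKT : ∀ k ∈ K, ∀ f ∈ T, k • f ∈ N := by
    intro k hk f hf
    have hle : Submodule.span R (↑s : Set (LocalizedModule (nonZeroDivisors R) M)) ≤ N.comap (LinearMap.lsmul R (LocalizedModule (nonZeroDivisors R) M) k) :=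
      Submodule.span_le.mpr (fun x hx => by
        simpa [LinearMap.lsmul_apply] using hKgen k hk x hx)
    have hfs : f ∈ Submodule.span R (↑s : Set (LocalizedModule (nonZeroDivisors R) M)) := by rw [hs] at hf; exact hf
    simpa [LinearMap.lsmul_apply] using hle hfs
  -- bad primes: minimal primes over (c) not containing I, plus associated primes of R
  set B : Set (Ideal R) :=
    {p ∈ (Ideal.span {c} : Ideal R).minimalPrimes | ¬ I ≤ p} ∪ associatedPrimes R R with hB
  have hminfin : (Ideal.span {c} : Ideal R).minimalPrimes.Finite := by
    rw [Ideal.minimalPrimes_eq_comap]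
    exact (minimalPrimes.finite_of_isNoetherianRing (R ⧸ Ideal.span {c})).image _
  have hBfin : B.Finite :=
    Set.Finite.union (hminfin.subset (Set.sep_subset _ _)) (assoc_finite R R)
  have hBprime : ∀ p ∈ B, p.IsPrime := by
    rintro p (⟨hp, -⟩ | hp)
    · exact hp.1.1
    · exact hp.isPrime
  -- regular elements avoid associated primes of R
  have hreg_not_mem : ∀ r ∈ nonZeroDivisors R, ∀ p ∈ associatedPrimes R R, r ∉ p := by
    intro r hr p hp hrp
    have hmem : r ∈ ⋃ p ∈ associatedPrimes R R, (p : Set R) := Set.mem_biUnion hp hrp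
    rw [biUnion_associatedPrimes_eq_zero_divisors] at hmem
    obtain ⟨x, hx0, hx⟩ := hmem
    exact hx0 (mem_nonZeroDivisors_iff_right.mp hr x (by rwa [mul_comm, ← smul_eq_mul]))
  have hKnle : ∀ p ∈ B, ¬ K ≤ p := by
    rintro p (⟨hp, hpI⟩ | hp) hKp
    · exact hpI (le_trans hIK hKp)
    · exact hreg_not_mem c hcS p hp (hKp hcK)
  -- prime avoidance
  obtain ⟨b, hbK, hbB⟩ : ∃ b ∈ K, ∀ p ∈ B, b ∉ p := by
    by_contra hcon
    push_neg at hcon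
    have hsub : (K : Set R) ⊆ ⋃ p ∈ (hBfin.toFinset : Set (Ideal R)), ((id p : Ideal R) : Set R) := by
      intro y hy
      obtain ⟨p, hpB, hyp⟩ := hcon y hy
      exact Set.mem_biUnion (by simpa using hpB) hyp
    obtain ⟨p, hpF, hKp⟩ := (Ideal.subset_union_prime (s := hBfin.toFinset) (f := id) ⊥ ⊥
      (fun p hp _ _ => hBprime p (by simpa using hp))).mp hsub
    exact hKnle p (by simpa using hpF) hKp
  have hbS : b ∈ nonZeroDivisors R := by
    rw [mem_nonZeroDivisors_iff_right]
    intro x hx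
    by_contra hx0
    have : b ∈ ⋃ p ∈ associatedPrimes R R, (p : Set R) := by
      rw [biUnion_associatedPrimes_eq_zero_divisors]
      exact ⟨x, hx0, by rwa [smul_eq_mul, mul_comm]⟩
    obtain ⟨p, hp, hbp⟩ := by
      simpa using this
    exact hbB p (Or.inr hp) hbp
  refine ⟨c, hcS, b, hbS, ?_⟩
  ext f
  simp only [Set.mem_inter_iff, Set.mem_setOf_eq]
  constructor
  · intro hf
    exact ⟨Set.mem_range.mpr (LinearMap.mem_range.mp (hKT c hcK f hf)),
      Set.mem_range.mpr (LinearMap.mem_range.mp (hKT b hbK f hf))⟩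
  · rintro ⟨h1, h2⟩
    have hcf : c • f ∈ N := LinearMap.mem_range.mpr (Set.mem_range.mp h1)
    have hbf : b • f ∈ N := LinearMap.mem_range.mpr (Set.mem_range.mp h2)
    rw [hT]
    refine ⟨Ideal.span {c, b}, ?_, ?_⟩
    · -- height of (c, b) is at least 2
      refine le_iInf₂ (fun P hP => ?_)
      have hcP : c ∈ P.asIdeal := hP (Ideal.subset_span (by simp))
      have hbP : b ∈ P.asIdeal := hP (Ideal.subset_span (by simp))
      have hspanc : Ideal.span {c} ≤ P.asIdeal := by
        rw [Ideal.span_le]; simpa using hcP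
      haveI := P.2
      obtain ⟨p₀, hp₀, hp₀P⟩ := Ideal.exists_minimalPrimes_le hspanc
      have hp₀prime : p₀.IsPrime := hp₀.1.1
      have hcp₀ : c ∈ p₀ := hp₀.1.2 (Ideal.mem_span_singleton_self c)
      by_cases hIp₀ : I ≤ p₀
      · exact hIht P (le_trans hIp₀ hp₀P)
      · -- chain q < p₀ < P
        have hbp₀ : b ∉ p₀ := hbB p₀ (Or.inl ⟨hp₀, hIp₀⟩)
        haveI := hp₀prime
        obtain ⟨q, hq, hqp₀⟩ := Ideal.exists_minimalPrimes_le (bot_le : ⊥ ≤ p₀)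
        have hqprime : q.IsPrime := hq.1.1
        have hcq : c ∉ q := not_mem_minimalPrimes_of_mem_nonZeroDivisors hcS hq
        let Q : PrimeSpectrum R := ⟨q, hqprime⟩
        let P₀ : PrimeSpectrum R := ⟨p₀, hp₀prime⟩
        have h1 : Q < P₀ := lt_of_le_of_ne hqp₀ (fun h =>
          hcq (by rw [show q = p₀ from congrArg PrimeSpectrum.asIdeal h]; exact hcp₀))
        have h2 : P₀ < P := lt_of_le_of_ne hp₀P (fun h =>
          hbp₀ (by rw [show p₀ = P.asIdeal from congrArg PrimeSpectrum.asIdeal h]; exact hbP))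
        have hchain : ((((RelSeries.singleton {(a, b) : PrimeSpectrum R × PrimeSpectrum R | a < b} Q).snoc P₀ h1).snoc P h2) :
            LTSeries (PrimeSpectrum R)).length = 2 := rfl
        have := Order.length_le_height_last
          (p := (((RelSeries.singleton {(a, b) : PrimeSpectrum R × PrimeSpectrum R | a < b} Q).snoc P₀ h1).snoc P h2))
        rw [hchain] at this
        exact this
    · intro i hi
      obtain ⟨u, v, huv⟩ := Ideal.mem_span_pair.mp hi
      have : i • f = u • (c • f) + v • (b • f) := by
        rw [← huv, add_smul, mul_smul, mul_smul]
      rw [this]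
      exact N.add_mem (N.smul_mem u hcf) (N.smul_mem v hbf)
end
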